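/- For any k-uniform hypergraph G on vertex set [n], the sum over all (k-1)-element subsets H of [n] of d(H)² is at most (k/C(n-1,k-1))·|E(G)|² + (k-1)(n-k)·|E(G)|. -/

import Mathlib

open Finset


private lemma bey_filter_subset_eq {n : ℕ} (E : Finset (Fin n)) (j : ℕ) :
    (Finset.univ.powersetCard j).filter (fun H => H ⊆ E) = E.powersetCard j := by
  ext H
  simp only [mem_filter, mem_powersetCard, subset_univ, true_and]
  tauto

private lemma bey_card_filter_subset {n : ℕ} (E : Finset (Fin n)) (j : ℕ) :
    ((Finset.univ.powersetCard j).filter (fun H => H ⊆ E)).card = E.card.choose j := by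
  rw [bey_filter_subset_eq, Finset.card_powersetCard]

private lemma bey_card_filter_superset {n : ℕ} (B : Finset (Fin n)) (j : ℕ) (hB : B.card ≤ j) :
    ((Finset.univ.powersetCard j).filter (fun F => B ⊆ F)).card
      = (n - B.card).choose (j - B.card) := by
  have h1 : ((Finset.univ.powersetCard j).filter (fun F => B ⊆ F)).card
      = (Bᶜ.powersetCard (j - B.card)).card := by
    apply Finset.card_bij (fun F _ => F \ B)
    · intro F hF
      simp only [mem_filter, mem_powersetCard] at hF
      rw [mem_powersetCard]
      constructor
      · intro x hx
        simp only [mem_sdiff] at hx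
        simp [Finset.mem_compl, hx.2]
      · rw [Finset.card_sdiff_of_subset hF.2, hF.1.2]
    · intro F₁ h₁ F₂ h₂ h
      simp only [mem_filter, mem_powersetCard] at h₁ h₂
      have := congrArg (· ∪ B) h
      simpa [Finset.sdiff_union_of_subset h₁.2, Finset.sdiff_union_of_subset h₂.2] using this
    · intro S hS
      rw [mem_powersetCard] at hS
      have hdisj : Disjoint S B := by
        rw [Finset.disjoint_left]
        intro a ha hb
        have := hS.1 ha
        rw [Finset.mem_compl] at this
        exact this hb
      refine ⟨S ∪ B, ?_, Finset.union_sdiff_cancel_right hdisj⟩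
      simp only [mem_filter, mem_powersetCard, subset_univ, true_and]
      refine ⟨?_, Finset.subset_union_right⟩
      rw [Finset.card_union_of_disjoint hdisj, hS.2]
      omega
  rw [h1, Finset.card_powersetCard, Finset.card_compl, Fintype.card_fin]

private lemma bey_card_filter_superset_zero {n : ℕ} (B : Finset (Fin n)) (j : ℕ) (hB : j < B.card) :
    ((Finset.univ.powersetCard j).filter (fun F => B ⊆ F)).card = 0 := by
  rw [Finset.card_eq_zero, Finset.filter_eq_empty_iff]
  intro F hF hBF
  rw [mem_powersetCard] at hF
  have := Finset.card_le_card hBF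
  omega

private lemma bey_sum_swap_filter {α β : Type*} (S : Finset α) (T : Finset β)
    (P : α → β → Prop) [∀ a b, Decidable (P a b)] (f : α → ℚ) (g : β → ℚ) :
    ∑ a ∈ S, f a * ∑ b ∈ T.filter (fun b => P a b), g b
      = ∑ b ∈ T, (∑ a ∈ S.filter (fun a => P a b), f a) * g b := by
  simp only [Finset.sum_filter, Finset.mul_sum, Finset.sum_mul]
  rw [Finset.sum_comm]
  refine Finset.sum_congr rfl fun b _ => Finset.sum_congr rfl fun a _ => ?_
  split_ifs <;> ring

private lemma bey_sum_sq_expand {α β : Type*} (S : Finset α) (T : Finset β)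
    (P : α → β → Prop) [∀ a b, Decidable (P a b)] (y : α → ℚ) :
    ∑ b ∈ T, (∑ a ∈ S.filter (fun a => P a b), y a) ^ 2
      = ∑ a ∈ S, ∑ a' ∈ S, y a * y a'
          * ((T.filter (fun b => P a b ∧ P a' b)).card : ℚ) := by
  have h : ∀ b ∈ T, (∑ a ∈ S.filter (fun a => P a b), y a) ^ 2
      = ∑ a ∈ S, ∑ a' ∈ S, (if P a b ∧ P a' b then y a * y a' else 0) := by
    intro b _
    rw [sq, Finset.sum_mul_sum]
    simp only [Finset.sum_filter]
    refine Finset.sum_congr rfl fun a _ => ?_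
    split_ifs with hP
    · exact Finset.sum_congr rfl fun a' _ => by simp [hP]
    · symm
      apply Finset.sum_eq_zero
      intro a' _
      simp [hP]
  rw [Finset.sum_congr rfl h, Finset.sum_comm]
  refine Finset.sum_congr rfl fun a _ => ?_
  rw [Finset.sum_comm]
  refine Finset.sum_congr rfl fun a' _ => ?_
  rw [← Finset.sum_filter, Finset.sum_const, nsmul_eq_mul]
  ring

/-- For mean-zero `z` on the `(j+1)`-sets, `‖Dz‖² ≤ j(n-j-1)‖z‖²`. -/
private lemma bey_key (n : ℕ) : ∀ (j : ℕ) (z : Finset (Fin n) → ℚ),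
    (∑ E ∈ Finset.univ.powersetCard (j+1), z E) = 0 →
    ∑ H ∈ Finset.univ.powersetCard j,
        (∑ E ∈ (Finset.univ.powersetCard (j+1)).filter (fun E => H ⊆ E), z E) ^ 2
      ≤ (j : ℚ) * ((n - (j+1) : ℕ) : ℚ)
          * ∑ E ∈ Finset.univ.powersetCard (j+1), (z E) ^ 2 := by
  intro j
  induction j with
  | zero =>
      intro z hz
      have h0 : (Finset.univ.powersetCard 0 : Finset (Finset (Fin n))) = {∅} := by
        simp
      have h1 : (Finset.univ.powersetCard 1).filter (fun E => (∅ : Finset (Fin n)) ⊆ E)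
          = Finset.univ.powersetCard 1 := by
        simp
      rw [h0, Finset.sum_singleton, h1, hz]
      norm_num
  | succ j ih =>
      intro z hz
      show ∑ H ∈ Finset.univ.powersetCard (j+1),
          (∑ E ∈ (Finset.univ.powersetCard (j+2)).filter (fun E => H ⊆ E), z E) ^ 2
        ≤ ((j+1 : ℕ) : ℚ) * ((n - (j+2) : ℕ) : ℚ)
            * ∑ E ∈ Finset.univ.powersetCard (j+2), (z E) ^ 2
      set C2 : Finset (Finset (Fin n)) := Finset.univ.powersetCard (j+2) with hC2
      set C1 : Finset (Finset (Fin n)) := Finset.univ.powersetCard (j+1) with hC1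
      set C0 : Finset (Finset (Fin n)) := Finset.univ.powersetCard j with hC0
      set y : Finset (Fin n) → ℚ := fun H => ∑ E ∈ C2.filter (fun E => H ⊆ E), z E with hy
      have hQgoal : (∑ H ∈ C1, (∑ E ∈ C2.filter (fun E => H ⊆ E), z E) ^ 2)
          = ∑ H ∈ C1, y H ^ 2 := rfl
      rw [hQgoal]
      set Q : ℚ := ∑ H ∈ C1, y H ^ 2 with hQdef
      set S : ℚ := ∑ E ∈ C2, (z E) ^ 2 with hSdef
      have hS0 : 0 ≤ S := Finset.sum_nonneg fun _ _ => sq_nonneg _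
      have hQ0 : 0 ≤ Q := Finset.sum_nonneg fun _ _ => sq_nonneg _
      -- membership facts
      have hmem1 : ∀ H ∈ C1, H.card = j + 1 ∧ j + 1 ≤ n := by
        intro H hH
        rw [hC1, mem_powersetCard] at hH
        have := Finset.card_le_univ H
        simp only [Finset.card_univ, Fintype.card_fin] at this
        omega
      -- Step 1 : ∑ y = 0
      have hy0 : ∑ H ∈ C1, y H = 0 := by
        have h := bey_sum_swap_filter C1 C2 (fun H E => H ⊆ E) (fun _ => (1:ℚ)) z
        simp only [one_mul] at h
        rw [hy]
        rw [h]
        have h2 : ∀ E ∈ C2, (∑ H ∈ C1.filter (fun H => H ⊆ E), (1:ℚ)) * z E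
            = ((j+2 : ℕ) : ℚ) * z E := by
          intro E hE
          rw [hC2, mem_powersetCard] at hE
          rw [Finset.sum_const, nsmul_eq_mul, mul_one, hC1, bey_card_filter_subset, hE.2,
            Nat.choose_succ_self_right]
        rw [Finset.sum_congr rfl h2, ← Finset.mul_sum, hz, mul_zero]
      -- Step 2 : up-down identity
      have hUD : ∑ F ∈ C2, (∑ H ∈ C1.filter (fun H => H ⊆ F), y H) ^ 2
          = (∑ G ∈ C0, (∑ H ∈ C1.filter (fun H => G ⊆ H), y H) ^ 2)
            + (((n - (j+1) : ℕ) : ℚ) - ((j:ℚ)+1)) * Q := by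
        rw [bey_sum_sq_expand C1 C2 (fun H F => H ⊆ F) y,
          bey_sum_sq_expand C1 C0 (fun H G => G ⊆ H) y]
        have hpt : ∀ H ∈ C1, ∀ H' ∈ C1,
            ((C2.filter (fun F => H ⊆ F ∧ H' ⊆ F)).card : ℚ)
            = ((C0.filter (fun G => G ⊆ H ∧ G ⊆ H')).card : ℚ)
              + (if H' = H then (((n - (j+1) : ℕ) : ℚ) - ((j:ℚ)+1)) else 0) := by
          intro H hH H' hH'
          obtain ⟨hHc, hn⟩ := hmem1 H hH
          obtain ⟨hH'c, -⟩ := hmem1 H' hH'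
          have hdown : (C0.filter (fun G => G ⊆ H ∧ G ⊆ H'))
              = (C0.filter (fun G => G ⊆ H ∩ H')) := by
            apply Finset.filter_congr
            intro G _
            simp [Finset.subset_inter_iff]
          have hup : (C2.filter (fun F => H ⊆ F ∧ H' ⊆ F))
              = (C2.filter (fun F => H ∪ H' ⊆ F)) := by
            apply Finset.filter_congr
            intro F _
            simp [Finset.union_subset_iff]
          have hdowncard : (C0.filter (fun G => G ⊆ H ∧ G ⊆ H')).card
              = (H ∩ H').card.choose j := by
            rw [hdown, hC0]
            have : (Finset.univ.powersetCard j).filter (fun G => G ⊆ H ∩ H')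
                = (Finset.univ.powersetCard j).filter (fun G' => G' ⊆ H ∩ H') := rfl
            rw [this, bey_card_filter_subset]
          by_cases heq : H' = H
          · subst heq
            simp only [if_pos rfl]
            rw [hdowncard]
            have hupcard : (C2.filter (fun F => H' ⊆ F ∧ H' ⊆ F)).card = n - (j+1) := by
              rw [hup, Finset.union_self, hC2, bey_card_filter_superset H' (j+2) (by omega),
                hH'c]
              have : j + 2 - (j+1) = 1 := by omega
              rw [this, Nat.choose_one_right]
            rw [hupcard, Finset.inter_self, hH'c, Nat.choose_succ_self_right]
            push_cast
            ring
          · simp only [if_neg heq]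
            rw [add_zero, hdowncard]
            have hcards : (H ∩ H').card + (H ∪ H').card = 2*(j+1) := by
              rw [Finset.card_inter_add_card_union, hHc, hH'c]; ring
            have hne : ¬ (H ⊆ H') := by
              intro hsub
              exact heq (Finset.eq_of_subset_of_card_le hsub (by omega)).symm
            have hne' : ¬ (H' ⊆ H) := by
              intro hsub
              exact heq (Finset.eq_of_subset_of_card_le hsub (by omega))
            have hss : H ⊂ H ∪ H' := by
              rw [Finset.ssubset_iff_subset_ne]
              refine ⟨Finset.subset_union_left, fun hcontra => ?_⟩
              exact hne' (hcontra ▸ Finset.subset_union_right)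
            have hlt : j + 1 < (H ∪ H').card := hHc ▸ Finset.card_lt_card hss
            rw [hup]
            by_cases hu : (H ∪ H').card ≤ j + 2
            · have hu2 : (H ∪ H').card = j + 2 := by omega
              rw [hC2, bey_card_filter_superset _ _ (by omega), hu2]
              have h1 : j + 2 - (j + 2) = 0 := by omega
              rw [h1, Nat.choose_zero_right]
              have h2 : (H ∩ H').card = j := by omega
              rw [h2, Nat.choose_self]
            · rw [hC2, bey_card_filter_superset_zero _ _ (by omega)]
              have h2 : (H ∩ H').card < j := by omega
              rw [Nat.choose_eq_zero_of_lt h2]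
        -- now sum the pointwise identity
        calc ∑ a ∈ C1, ∑ a' ∈ C1, y a * y a' * ((C2.filter (fun b => a ⊆ b ∧ a' ⊆ b)).card : ℚ)
            = ∑ a ∈ C1, ∑ a' ∈ C1, (y a * y a' * ((C0.filter (fun b => b ⊆ a ∧ b ⊆ a')).card : ℚ)
                + (if a' = a then y a * y a' * (((n - (j+1) : ℕ) : ℚ) - ((j:ℚ)+1)) else 0)) := by
              refine Finset.sum_congr rfl fun a ha => Finset.sum_congr rfl fun a' ha' => ?_
              rw [hpt a ha a' ha']
              split_ifs <;> ring
          _ = (∑ a ∈ C1, ∑ a' ∈ C1, y a * y a' * ((C0.filter (fun b => b ⊆ a ∧ b ⊆ a')).card : ℚ))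
                + (((n - (j+1) : ℕ) : ℚ) - ((j:ℚ)+1)) * Q := by
              rw [Finset.sum_congr rfl (fun a (_ : a ∈ C1) => Finset.sum_add_distrib),
                Finset.sum_add_distrib]
              congr 1
              have hcollapse : ∀ a ∈ C1,
                  (∑ a' ∈ C1, if a' = a then y a * y a' * (((n - (j+1) : ℕ) : ℚ) - ((j:ℚ)+1)) else 0)
                  = y a ^ 2 * (((n - (j+1) : ℕ) : ℚ) - ((j:ℚ)+1)) := by
                intro a ha
                rw [Finset.sum_ite_eq' C1 a
                  (fun a' => y a * y a' * (((n - (j+1) : ℕ) : ℚ) - ((j:ℚ)+1))), if_pos ha]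
                ring
              rw [Finset.sum_congr rfl hcollapse, ← Finset.sum_mul, ← hQdef]
              ring
      -- Step 3 : induction hypothesis applied to y
      have hih : ∑ G ∈ C0, (∑ H ∈ C1.filter (fun H => G ⊆ H), y H) ^ 2
          ≤ (j : ℚ) * ((n - (j+1) : ℕ) : ℚ) * Q := ih y hy0
      -- Step 4 : coefficient inequality
      have hcoef : (j : ℚ) * ((n - (j+1) : ℕ) : ℚ) + (((n - (j+1) : ℕ) : ℚ) - ((j:ℚ)+1))
          ≤ ((j:ℚ)+1) * ((n - (j+2) : ℕ) : ℚ) := by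
        rcases le_or_gt (j+2) n with h | h
        · have h1 : ((n - (j+1) : ℕ) : ℚ) = (n:ℚ) - ((j:ℚ)+1) := by
            have : (j+1) ≤ n := by omega
            push_cast [Nat.cast_sub this]
            ring
          have h2 : ((n - (j+2) : ℕ) : ℚ) = (n:ℚ) - ((j:ℚ)+2) := by
            push_cast [Nat.cast_sub h]
            ring
          rw [h1, h2]
          ring_nf
          nlinarith [sq_nonneg ((j:ℚ))]
        · have h1 : n - (j+1) = 0 := by omega
          have h2 : n - (j+2) = 0 := by omega
          rw [h1, h2]
          push_cast
          nlinarith [Nat.cast_nonneg (α := ℚ) j]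
      -- Step 5 : bound on ∑ (Uy)²
      have hUp : ∑ F ∈ C2, (∑ H ∈ C1.filter (fun H => H ⊆ F), y H) ^ 2
          ≤ ((j:ℚ)+1) * ((n - (j+2) : ℕ) : ℚ) * Q := by
        rw [hUD]
        nlinarith [hQ0, hih, hcoef]
      -- Step 6 : adjointness : Q = ∑_E (Uy E) * z E
      have hadj : Q = ∑ E ∈ C2, (∑ H ∈ C1.filter (fun H => H ⊆ E), y H) * z E := by
        rw [hQdef]
        have : ∀ H ∈ C1, y H ^ 2 = y H * ∑ E ∈ C2.filter (fun E => H ⊆ E), z E := by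
          intro H _
          rw [sq, hy]
        rw [Finset.sum_congr rfl this, bey_sum_swap_filter C1 C2 (fun H E => H ⊆ E) y z]
      -- Step 7 : Cauchy–Schwarz
      have hCS : Q ^ 2 ≤ (((j:ℚ)+1) * ((n - (j+2) : ℕ) : ℚ) * Q) * S := by
        calc Q ^ 2 = (∑ E ∈ C2, (∑ H ∈ C1.filter (fun H => H ⊆ E), y H) * z E) ^ 2 := by
              rw [← hadj]
          _ ≤ (∑ E ∈ C2, (∑ H ∈ C1.filter (fun H => H ⊆ E), y H) ^ 2) * ∑ E ∈ C2, z E ^ 2 :=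
              Finset.sum_mul_sq_le_sq_mul_sq C2 _ _
          _ ≤ (((j:ℚ)+1) * ((n - (j+2) : ℕ) : ℚ) * Q) * S := by
              rw [← hSdef]
              exact mul_le_mul_of_nonneg_right hUp hS0
      -- Step 8 : conclude
      have hfin : Q ≤ ((j:ℚ)+1) * ((n - (j+2) : ℕ) : ℚ) * S := by
        rcases eq_or_lt_of_le hQ0 with hq | hq
        · calc Q = 0 := hq.symm
            _ ≤ _ := mul_nonneg (mul_nonneg (by positivity) (Nat.cast_nonneg _)) hS0
        · have h' : Q * Q ≤ Q * (((j:ℚ)+1) * ((n - (j+2) : ℕ) : ℚ) * S) := by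
            calc Q * Q = Q ^ 2 := (sq Q).symm
              _ ≤ (((j:ℚ)+1) * ((n - (j+2) : ℕ) : ℚ) * Q) * S := hCS
              _ = Q * (((j:ℚ)+1) * ((n - (j+2) : ℕ) : ℚ) * S) := by ring
          exact (mul_le_mul_iff_right₀ hq).mp h'
      calc Q ≤ ((j:ℚ)+1) * ((n - (j+2) : ℕ) : ℚ) * S := hfin
        _ = ((j+1 : ℕ) : ℚ) * ((n - (j+2) : ℕ) : ℚ) * S := by push_cast; ring

/-- The `ℓ = k-1` case of Bey's inequality: for a `k`-uniform hypergraph `G` on `n` vertices,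
`∑_{|H| = k-1} d(H)² ≤ (k/C(n-1,k-1))·|G|² + (k-1)(n-k)·|G|`. -/
theorem bey_inequality_codegree (n k : ℕ) (hk : 1 ≤ k)
    (G : Finset (Finset (Fin n))) (hG : ∀ E ∈ G, E.card = k) :
    ∑ H ∈ Finset.univ.powersetCard (k - 1),
        (((G.filter fun E => H ⊆ E).card : ℚ)) ^ 2 ≤
      (k : ℚ) / (((n - 1).choose (k - 1) : ℕ) : ℚ) * (G.card : ℚ) ^ 2
        + ((k - 1 : ℕ) : ℚ) * ((n - k : ℕ) : ℚ) * (G.card : ℚ) := by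
  obtain ⟨j, rfl⟩ : ∃ j, k = j + 1 := ⟨k - 1, by omega⟩
  simp only [Nat.add_sub_cancel]
  by_cases hn : j + 1 ≤ n
  swap
  · have hGe : G = ∅ := by
      rw [Finset.eq_empty_iff_forall_notMem]
      intro E hE
      have h1 := hG E hE
      have h2 : E.card ≤ n := by
        have := Finset.card_le_univ E
        simpa using this
      omega
    subst hGe
    simp
  · -- main case
    set N : ℕ := n.choose (j+1) with hNdef
    have hNpos : 0 < N := Nat.choose_pos hn
    have hNQ : (0:ℚ) < (N:ℚ) := by exact_mod_cast hNpos
    set m : ℚ := (G.card : ℚ) with hmdef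
    set x : Finset (Fin n) → ℚ := fun E => if E ∈ G then 1 else 0 with hxdef
    set z : Finset (Fin n) → ℚ := fun E => x E - m / (N:ℚ) with hzdef
    have hGsub : G ⊆ Finset.univ.powersetCard (j+1) := by
      intro E hE
      rw [mem_powersetCard]
      exact ⟨Finset.subset_univ _, hG E hE⟩
    have hcardC : (Finset.univ.powersetCard (j+1) : Finset (Finset (Fin n))).card = N := by
      rw [Finset.card_powersetCard, Finset.card_univ, Fintype.card_fin]
    have hsumx : ∑ E ∈ Finset.univ.powersetCard (j+1), x E = m := by
      rw [hxdef, hmdef]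
      rw [Finset.sum_boole]
      congr 1
      rw [Finset.filter_mem_eq_inter, Finset.inter_eq_right.mpr hGsub]
    have hsumx2 : ∑ E ∈ Finset.univ.powersetCard (j+1), (x E) ^ 2 = m := by
      rw [← hsumx]
      refine Finset.sum_congr rfl fun E _ => ?_
      rw [hxdef]
      by_cases hEG : E ∈ G <;> simp [hEG]
    have hz0 : ∑ E ∈ Finset.univ.powersetCard (j+1), z E = 0 := by
      rw [hzdef]
      simp only [Finset.sum_sub_distrib, hsumx, Finset.sum_const, hcardC, nsmul_eq_mul]
      field_simp
      ring
    have hsz : ∑ E ∈ Finset.univ.powersetCard (j+1), (z E) ^ 2 = m - m^2 / (N:ℚ) := by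
      have hexp : ∀ E ∈ Finset.univ.powersetCard (j+1),
          (z E)^2 = (x E)^2 - 2*(m/(N:ℚ))*(x E) + (m/(N:ℚ))^2 := by
        intro E _
        rw [hzdef]
        ring
      rw [Finset.sum_congr rfl hexp]
      simp only [Finset.sum_add_distrib, Finset.sum_sub_distrib, hsumx2, ← Finset.mul_sum,
        hsumx, Finset.sum_const, hcardC, nsmul_eq_mul]
      field_simp
      ring
    -- codegrees in terms of z
    have hd : ∀ H ∈ Finset.univ.powersetCard j,
        ((G.filter fun E => H ⊆ E).card : ℚ)
          = (∑ E ∈ (Finset.univ.powersetCard (j+1)).filter (fun E => H ⊆ E), z E)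
            + (m / (N:ℚ)) * ((n - j : ℕ) : ℚ) := by
      intro H hH
      have hHc : H.card = j := (mem_powersetCard.mp hH).2
      have hcnt : ((Finset.univ.powersetCard (j+1)).filter (fun E => H ⊆ E)).card = n - j := by
        rw [bey_card_filter_superset H (j+1) (by omega), hHc]
        have h1 : j + 1 - j = 1 := by omega
        rw [h1, Nat.choose_one_right]
      have hset : ((Finset.univ.powersetCard (j+1)).filter (fun E => H ⊆ E)).filter
          (fun E => E ∈ G) = G.filter (fun E => H ⊆ E) := by
        ext E
        simp only [Finset.mem_filter, mem_powersetCard]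
        exact ⟨fun h => ⟨h.2, h.1.2⟩, fun h => ⟨⟨⟨Finset.subset_univ _, hG E h.1⟩, h.2⟩, h.1⟩⟩
      have hsx : ∑ E ∈ (Finset.univ.powersetCard (j+1)).filter (fun E => H ⊆ E), x E
          = ((G.filter fun E => H ⊆ E).card : ℚ) := by
        rw [hxdef, Finset.sum_boole, hset]
      rw [hzdef]
      simp only [Finset.sum_sub_distrib, hsx, Finset.sum_const, hcnt, nsmul_eq_mul]
      ring
    -- sum of the z-codegree over H vanishes
    have hy0 : ∑ H ∈ Finset.univ.powersetCard j,
        (∑ E ∈ (Finset.univ.powersetCard (j+1)).filter (fun E => H ⊆ E), z E) = 0 := by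
      have h := bey_sum_swap_filter (Finset.univ.powersetCard j)
        (Finset.univ.powersetCard (j+1)) (fun H E => H ⊆ E) (fun _ => (1:ℚ)) z
      simp only [one_mul] at h
      rw [h]
      have h2 : ∀ E ∈ Finset.univ.powersetCard (j+1),
          (∑ H ∈ (Finset.univ.powersetCard j).filter (fun H => H ⊆ E), (1:ℚ)) * z E
          = ((j+1 : ℕ) : ℚ) * z E := by
        intro E hE
        rw [Finset.sum_const, nsmul_eq_mul, mul_one, bey_card_filter_subset,
          (mem_powersetCard.mp hE).2, Nat.choose_succ_self_right]
      rw [Finset.sum_congr rfl h2, ← Finset.mul_sum, hz0, mul_zero]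
    -- expand the left-hand side
    have hLHS : ∑ H ∈ Finset.univ.powersetCard j, ((G.filter fun E => H ⊆ E).card : ℚ) ^ 2
        = (∑ H ∈ Finset.univ.powersetCard j,
            (∑ E ∈ (Finset.univ.powersetCard (j+1)).filter (fun E => H ⊆ E), z E) ^ 2)
          + (m / (N:ℚ))^2 * ((n - j : ℕ) : ℚ)^2 * (n.choose j : ℚ) := by
      have hexp : ∀ H ∈ Finset.univ.powersetCard j,
          ((G.filter fun E => H ⊆ E).card : ℚ) ^ 2
          = (∑ E ∈ (Finset.univ.powersetCard (j+1)).filter (fun E => H ⊆ E), z E) ^ 2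
            + 2 * ((m / (N:ℚ)) * ((n - j : ℕ) : ℚ))
                * (∑ E ∈ (Finset.univ.powersetCard (j+1)).filter (fun E => H ⊆ E), z E)
            + (m / (N:ℚ))^2 * ((n - j : ℕ) : ℚ)^2 := by
        intro H hH
        rw [hd H hH]
        ring
      rw [Finset.sum_congr rfl hexp]
      simp only [Finset.sum_add_distrib, ← Finset.mul_sum, hy0, mul_zero, add_zero,
        Finset.sum_const, nsmul_eq_mul, Finset.card_powersetCard, Finset.card_univ,
        Fintype.card_fin]
      ring
    -- apply the key lemma
    have hkey := bey_key n j z hz0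
    rw [hsz] at hkey
    -- choose identities
    have hI1 : ((j:ℚ)+1) * (N:ℚ) = (n:ℚ) * (((n-1).choose j : ℕ) : ℚ) := by
      have h1 : n * ((n-1).choose j) = n.choose (j+1) * (j+1) := by
        have h2 := Nat.add_one_mul_choose_eq (n-1) j
        have h3 : n - 1 + 1 = n := by omega
        rw [h3] at h2
        simpa using h2
      have := congrArg (fun t : ℕ => (t : ℚ)) h1
      push_cast at this
      rw [hNdef]
      push_cast
      linarith [this]
    have hI2 : ((n - j : ℕ) : ℚ) * (n.choose j : ℚ) = ((j:ℚ)+1) * (N:ℚ) := by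
      have h1 := Nat.choose_succ_right_eq n j
      have := congrArg (fun t : ℕ => (t : ℚ)) h1
      push_cast at this
      rw [hNdef]
      push_cast
      linarith [this]
    have hCne : (((n-1).choose j : ℕ) : ℚ) ≠ 0 := by
      have : 0 < (n-1).choose j := Nat.choose_pos (by omega)
      positivity
    have hcast1 : ((n - j : ℕ) : ℚ) = (n:ℚ) - (j:ℚ) := by
      have : j ≤ n := by omega
      push_cast [Nat.cast_sub this]
      ring
    have hcast2 : ((n - (j+1) : ℕ) : ℚ) = (n:ℚ) - (j:ℚ) - 1 := by
      push_cast [Nat.cast_sub hn]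
      ring
    -- final computation
    rw [hLHS]
    have hfinal : (j : ℚ) * ((n - (j+1) : ℕ) : ℚ) * (m - m^2/(N:ℚ))
          + (m / (N:ℚ))^2 * ((n - j : ℕ) : ℚ)^2 * (n.choose j : ℚ)
        = ((j:ℚ)+1) / (((n-1).choose j : ℕ) : ℚ) * m^2
          + (j : ℚ) * ((n - (j+1) : ℕ) : ℚ) * m := by
      have hNne : (N:ℚ) ≠ 0 := ne_of_gt hNQ
      have hnne : (n:ℚ) ≠ 0 := by
        have h0 : 0 < n := by omega
        positivity
      have hnj : (n:ℚ) - (j:ℚ) ≠ 0 := by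
        have h5 : (j:ℚ) + 1 ≤ (n:ℚ) := by exact_mod_cast hn
        intro hcontra
        linarith
      have hp : (n.choose j : ℚ) = ((j:ℚ)+1) * (N:ℚ) / ((n:ℚ) - (j:ℚ)) := by
        rw [eq_div_iff hnj]
        rw [hcast1] at hI2
        linarith [hI2]
      have hc : (((n-1).choose j : ℕ) : ℚ) = ((j:ℚ)+1) * (N:ℚ) / (n:ℚ) := by
        rw [eq_div_iff hnne]
        linarith [hI1]
      rw [hcast1, hcast2, hp, hc]
      have hjN : ((j:ℚ)+1) * (N:ℚ) ≠ 0 := by positivity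
      field_simp
      ring
    calc (∑ H ∈ Finset.univ.powersetCard j,
            (∑ E ∈ (Finset.univ.powersetCard (j+1)).filter (fun E => H ⊆ E), z E) ^ 2)
          + (m / (N:ℚ))^2 * ((n - j : ℕ) : ℚ)^2 * (n.choose j : ℚ)
        ≤ (j : ℚ) * ((n - (j+1) : ℕ) : ℚ) * (m - m^2/(N:ℚ))
          + (m / (N:ℚ))^2 * ((n - j : ℕ) : ℚ)^2 * (n.choose j : ℚ) := add_le_add hkey le_rfl
      _ = ((j:ℚ)+1) / (((n-1).choose j : ℕ) : ℚ) * m^2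
          + (j : ℚ) * ((n - (j+1) : ℕ) : ℚ) * m := hfinal
      _ = ((j+1:ℕ) : ℚ) / (((n-1).choose j : ℕ) : ℚ) * m^2
          + ((j:ℕ) : ℚ) * ((n - (j+1) : ℕ) : ℚ) * m := by push_cast; ring
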